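/- Let X be a compact Hermitian complex manifold and let E = ∂∂̄(∂∂̄)† + (∂∂̄)†∂∂̄ + (∂†∂̄)†∂†∂̄ + ∂†∂̄(∂†∂̄)† + ∂̄†∂̄ + ∂†∂ be the Kodaira–Spencer operator acting on (2,2)-forms, with adjoints taken with respect to a fixed reference metric. Then (i) ker E = { η ∈ Λ^{2,2}(X) : dη = 0 and ∂̄†∂†η = 0 }; and (ii) if χ is a (1,1)-form and γ ∈ (ker E)^⊥ is the unique solution of E(γ) = i∂∂̄χ, then dγ = 0, so that E(γ) = ∂∂̄∂̄†∂†γ = i∂∂̄χ. -/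

import Mathlib

/-!
The Hodge-theoretic machinery of the Kodaira–Spencer operator
`E = ∂∂̄(∂∂̄)† + (∂∂̄)†∂∂̄ + (∂†∂̄)†∂†∂̄ + ∂†∂̄(∂†∂̄)† + ∂̄†∂̄ + ∂†∂`
acting on `(2,2)`-forms of a compact Hermitian complex manifold.  The spaces
`V p q` of `(p,q)`-forms are recorded as complex inner product spaces, with
`∂`, `∂̄` and their formal adjoints as linear maps.
-/

noncomputable section

/-- the Dolbeault double complex of a compact Hermitian complex manifold,
with the formal adjoints of `∂` and `∂̄` with respect to a fixed reference
metric. -/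
structure DolbeaultHodge where
  /-- the space of `(p,q)`-forms -/
  V : ℕ → ℕ → Type
  [instN : ∀ p q, NormedAddCommGroup (V p q)]
  [instI : ∀ p q, InnerProductSpace ℂ (V p q)]
  /-- the operator `∂` -/
  dH : ∀ p q, V p q →ₗ[ℂ] V (p+1) q
  /-- the operator `∂̄` -/
  dA : ∀ p q, V p q →ₗ[ℂ] V p (q+1)
  /-- the formal adjoint `∂†` -/
  dHdag : ∀ p q, V (p+1) q →ₗ[ℂ] V p q
  /-- the formal adjoint `∂̄†` -/
  dAdag : ∀ p q, V p (q+1) →ₗ[ℂ] V p q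
  adj_H : ∀ p q (u : V p q) (v : V (p+1) q),
      (inner ℂ (dH p q u) v : ℂ) = inner ℂ u (dHdag p q v)
  adj_A : ∀ p q (u : V p q) (v : V p (q+1)),
      (inner ℂ (dA p q u) v : ℂ) = inner ℂ u (dAdag p q v)
  dH_sq : ∀ p q (u : V p q), dH (p+1) q (dH p q u) = 0
  dA_sq : ∀ p q (u : V p q), dA p (q+1) (dA p q u) = 0
  anticomm : ∀ p q (u : V p q), dH p (q+1) (dA p q u) = - dA (p+1) q (dH p q u)

attribute [instance] DolbeaultHodge.instN DolbeaultHodge.instI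

namespace DolbeaultHodge

variable (S : DolbeaultHodge)

/-- the Kodaira–Spencer operator
`E = ∂∂̄(∂∂̄)† + (∂∂̄)†∂∂̄ + (∂†∂̄)†∂†∂̄ + ∂†∂̄(∂†∂̄)† + ∂̄†∂̄ + ∂†∂`
on `(2,2)`-forms. -/
def KS (η : S.V 2 2) : S.V 2 2 :=
  S.dH 1 2 (S.dA 1 1 (S.dAdag 1 1 (S.dHdag 1 2 η)))
  + S.dAdag 2 2 (S.dHdag 2 3 (S.dH 2 3 (S.dA 2 2 η)))
  + S.dAdag 2 2 (S.dH 1 3 (S.dHdag 1 3 (S.dA 2 2 η)))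
  + S.dHdag 2 2 (S.dA 3 1 (S.dAdag 3 1 (S.dH 2 2 η)))
  + S.dAdag 2 2 (S.dA 2 2 η)
  + S.dHdag 2 2 (S.dH 2 2 η)

/-- `E` as a linear map. -/
def KSlin : S.V 2 2 →ₗ[ℂ] S.V 2 2 where
  toFun := S.KS
  map_add' := by intro u v; simp [KS, map_add]; abel
  map_smul' := by intro c u; simp [KS, map_smul]

/-- `∂̄†∂†η` for a `(2,2)`-form. -/
def dbarDagDdag (η : S.V 2 2) : S.V 1 1 := S.dAdag 1 1 (S.dHdag 1 2 η)

end DolbeaultHodge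

section Aux

variable (S : DolbeaultHodge)

lemma adjH1 (p q : ℕ) (u : S.V p q) (v : S.V (p+1) q) :
    (inner ℂ u (S.dHdag p q v) : ℂ) = inner ℂ (S.dH p q u) v := (S.adj_H p q u v).symm

lemma adjA1 (p q : ℕ) (u : S.V p q) (v : S.V p (q+1)) :
    (inner ℂ u (S.dAdag p q v) : ℂ) = inner ℂ (S.dA p q u) v := (S.adj_A p q u v).symm

lemma adjH2 (p q : ℕ) (u : S.V p q) (v : S.V (p+1) q) :
    (inner ℂ v (S.dH p q u) : ℂ) = inner ℂ (S.dHdag p q v) u := by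
  rw [← inner_conj_symm, S.adj_H, inner_conj_symm]

lemma adjA2 (p q : ℕ) (u : S.V p q) (v : S.V p (q+1)) :
    (inner ℂ v (S.dA p q u) : ℂ) = inner ℂ (S.dAdag p q v) u := by
  rw [← inner_conj_symm, S.adj_A, inner_conj_symm]

lemma piece1 (η : S.V 2 2) :
    (inner ℂ η (S.dH 1 2 (S.dA 1 1 (S.dAdag 1 1 (S.dHdag 1 2 η)))) : ℂ)
      = (‖S.dAdag 1 1 (S.dHdag 1 2 η)‖ : ℂ)^2 := by
  rw [adjH2, adjA2]; exact inner_self_eq_norm_sq_to_K _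

lemma piece2 (η : S.V 2 2) :
    (inner ℂ η (S.dAdag 2 2 (S.dHdag 2 3 (S.dH 2 3 (S.dA 2 2 η)))) : ℂ)
      = (‖S.dH 2 3 (S.dA 2 2 η)‖ : ℂ)^2 := by
  rw [adjA1, adjH1]; exact inner_self_eq_norm_sq_to_K _

lemma piece3 (η : S.V 2 2) :
    (inner ℂ η (S.dAdag 2 2 (S.dH 1 3 (S.dHdag 1 3 (S.dA 2 2 η)))) : ℂ)
      = (‖S.dHdag 1 3 (S.dA 2 2 η)‖ : ℂ)^2 := by
  rw [adjA1, adjH2]; exact inner_self_eq_norm_sq_to_K _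

lemma piece4 (η : S.V 2 2) :
    (inner ℂ η (S.dHdag 2 2 (S.dA 3 1 (S.dAdag 3 1 (S.dH 2 2 η)))) : ℂ)
      = (‖S.dAdag 3 1 (S.dH 2 2 η)‖ : ℂ)^2 := by
  rw [adjH1, adjA2]; exact inner_self_eq_norm_sq_to_K _

lemma piece5 (η : S.V 2 2) :
    (inner ℂ η (S.dAdag 2 2 (S.dA 2 2 η)) : ℂ) = (‖S.dA 2 2 η‖ : ℂ)^2 := by
  rw [adjA1]; exact inner_self_eq_norm_sq_to_K _

lemma piece6 (η : S.V 2 2) :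
    (inner ℂ η (S.dHdag 2 2 (S.dH 2 2 η)) : ℂ) = (‖S.dH 2 2 η‖ : ℂ)^2 := by
  rw [adjH1]; exact inner_self_eq_norm_sq_to_K _

/-- `∂̄ ∂ ∂̄ = 0`. -/
lemma dAdHdA (x : S.V 1 1) : S.dA 2 2 (S.dH 1 2 (S.dA 1 1 x)) = 0 := by
  have h := S.anticomm 1 2 (S.dA 1 1 x)
  rw [S.dA_sq, map_zero] at h
  exact neg_eq_zero.mp h.symm

/-- `∂∂̄x` is orthogonal to the image of `∂̄†`. -/
lemma orthoA (x : S.V 1 1) (v : S.V 2 3) :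
    (inner ℂ (S.dH 1 2 (S.dA 1 1 x)) (S.dAdag 2 2 v) : ℂ) = 0 := by
  rw [adjA1, dAdHdA, inner_zero_left]

/-- `∂∂̄x` is orthogonal to the image of `∂†`. -/
lemma orthoH (x : S.V 1 1) (v : S.V 3 2) :
    (inner ℂ (S.dH 1 2 (S.dA 1 1 x)) (S.dHdag 2 2 v) : ℂ) = 0 := by
  rw [adjH1, S.dH_sq, inner_zero_left]

end Aux

/-!
STATEMENT 13: for the Kodaira–Spencer operator `E` on `(2,2)`-forms of a
compact Hermitian complex manifold:
(i) `ker E = {η : dη = 0 and ∂̄†∂†η = 0}`;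
(ii) if `χ` is a `(1,1)`-form and `γ ∈ (ker E)ᗮ` solves `E(γ) = i∂∂̄χ`, then
`dγ = 0`, so that `E(γ) = ∂∂̄∂̄†∂†γ = i∂∂̄χ`.
(For a `(2,2)`-form `η` of pure type, `dη = 0` means `∂η = 0` and `∂̄η = 0`.)
-/

set_option maxHeartbeats 1000000 in
open DolbeaultHodge in
theorem kodaira_spencer_kernel_and_solution (S : DolbeaultHodge) :
    -- (i) the kernel of the Kodaira–Spencer operator
    ({η : S.V 2 2 | S.KS η = 0}
      = {η : S.V 2 2 | S.dH 2 2 η = 0 ∧ S.dA 2 2 η = 0 ∧ S.dbarDagDdag η = 0})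
    ∧
    -- (ii) the canonical solution of `E(γ) = i∂∂̄χ` is closed
    (∀ (χ : S.V 1 1) (γ : S.V 2 2),
      γ ∈ (LinearMap.ker S.KSlin)ᗮ →
      S.KS γ = Complex.I • S.dH 1 2 (S.dA 1 1 χ) →
      (S.dH 2 2 γ = 0 ∧ S.dA 2 2 γ = 0
        ∧ S.KS γ = S.dH 1 2 (S.dA 1 1 (S.dbarDagDdag γ)))) := by
  constructor
  · ext η
    simp only [Set.mem_setOf_eq]
    constructor
    · intro h
      have h0 : (inner ℂ η (S.KS η) : ℂ) = 0 := by rw [h, inner_zero_right]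
      rw [KS] at h0
      simp only [inner_add_right, piece1, piece2, piece3, piece4, piece5, piece6] at h0
      have hr : ‖S.dAdag 1 1 (S.dHdag 1 2 η)‖^2 + ‖S.dH 2 3 (S.dA 2 2 η)‖^2
          + ‖S.dHdag 1 3 (S.dA 2 2 η)‖^2 + ‖S.dAdag 3 1 (S.dH 2 2 η)‖^2
          + ‖S.dA 2 2 η‖^2 + ‖S.dH 2 2 η‖^2 = (0:ℝ) := by exact_mod_cast h0
      refine ⟨?_, ?_, ?_⟩
      · have : ‖S.dH 2 2 η‖^2 = 0 := by
          nlinarith [sq_nonneg ‖S.dAdag 1 1 (S.dHdag 1 2 η)‖, sq_nonneg ‖S.dH 2 3 (S.dA 2 2 η)‖,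
            sq_nonneg ‖S.dHdag 1 3 (S.dA 2 2 η)‖, sq_nonneg ‖S.dAdag 3 1 (S.dH 2 2 η)‖,
            sq_nonneg ‖S.dA 2 2 η‖]
        exact norm_eq_zero.mp (sq_eq_zero_iff.mp this)
      · have : ‖S.dA 2 2 η‖^2 = 0 := by
          nlinarith [sq_nonneg ‖S.dAdag 1 1 (S.dHdag 1 2 η)‖, sq_nonneg ‖S.dH 2 3 (S.dA 2 2 η)‖,
            sq_nonneg ‖S.dHdag 1 3 (S.dA 2 2 η)‖, sq_nonneg ‖S.dAdag 3 1 (S.dH 2 2 η)‖,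
            sq_nonneg ‖S.dH 2 2 η‖]
        exact norm_eq_zero.mp (sq_eq_zero_iff.mp this)
      · have : ‖S.dAdag 1 1 (S.dHdag 1 2 η)‖^2 = 0 := by
          nlinarith [sq_nonneg ‖S.dA 2 2 η‖, sq_nonneg ‖S.dH 2 3 (S.dA 2 2 η)‖,
            sq_nonneg ‖S.dHdag 1 3 (S.dA 2 2 η)‖, sq_nonneg ‖S.dAdag 3 1 (S.dH 2 2 η)‖,
            sq_nonneg ‖S.dH 2 2 η‖]
        exact norm_eq_zero.mp (sq_eq_zero_iff.mp this)
    · rintro ⟨h1, h2, h3⟩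
      have h3' : S.dAdag 1 1 (S.dHdag 1 2 η) = 0 := h3
      simp [KS, h1, h2, h3', map_zero]
  · intro χ γ _ hγ
    rw [KS] at hγ
    set u : S.V 1 1 := S.dAdag 1 1 (S.dHdag 1 2 γ) with hu
    set x : S.V 1 1 := u - Complex.I • χ with hx
    set t2 := S.dAdag 2 2 (S.dHdag 2 3 (S.dH 2 3 (S.dA 2 2 γ))) with ht2
    set t3 := S.dAdag 2 2 (S.dH 1 3 (S.dHdag 1 3 (S.dA 2 2 γ))) with ht3
    set t4 := S.dHdag 2 2 (S.dA 3 1 (S.dAdag 3 1 (S.dH 2 2 γ))) with ht4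
    set t5 := S.dAdag 2 2 (S.dA 2 2 γ) with ht5
    set t6 := S.dHdag 2 2 (S.dH 2 2 γ) with ht6
    set Q2 := t2 + t3 + t4 + t5 + t6 with hQ2def
    have hw : S.dH 1 2 (S.dA 1 1 x) =
        S.dH 1 2 (S.dA 1 1 u) - Complex.I • S.dH 1 2 (S.dA 1 1 χ) := by
      rw [hx, map_sub, map_smul, map_sub, map_smul]
    have hsum : S.dH 1 2 (S.dA 1 1 x) + Q2 = 0 := by
      rw [hw, hQ2def, sub_add_eq_add_sub, sub_eq_zero, ← hγ]
      simp only [add_assoc]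
    have horth : (inner ℂ (S.dH 1 2 (S.dA 1 1 x)) Q2 : ℂ) = 0 := by
      rw [hQ2def, ht2, ht3, ht4, ht5, ht6]
      simp only [inner_add_right, orthoA, orthoH]
      norm_num
    have hQ2 : Q2 = 0 := by
      have hwq : S.dH 1 2 (S.dA 1 1 x) = -Q2 := eq_neg_of_add_eq_zero_left hsum
      rw [hwq, inner_neg_left, neg_eq_zero, inner_self_eq_zero] at horth
      exact horth
    have hpair : (inner ℂ γ Q2 : ℂ) = 0 := by rw [hQ2, inner_zero_right]
    rw [hQ2def, ht2, ht3, ht4, ht5, ht6] at hpair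
    simp only [inner_add_right, piece2, piece3, piece4, piece5, piece6] at hpair
    have hr : ‖S.dH 2 3 (S.dA 2 2 γ)‖^2 + ‖S.dHdag 1 3 (S.dA 2 2 γ)‖^2
        + ‖S.dAdag 3 1 (S.dH 2 2 γ)‖^2 + ‖S.dA 2 2 γ‖^2 + ‖S.dH 2 2 γ‖^2 = (0:ℝ) := by
      exact_mod_cast hpair
    have hH : S.dH 2 2 γ = 0 := by
      have : ‖S.dH 2 2 γ‖^2 = 0 := by
        nlinarith [sq_nonneg ‖S.dH 2 3 (S.dA 2 2 γ)‖, sq_nonneg ‖S.dHdag 1 3 (S.dA 2 2 γ)‖,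
          sq_nonneg ‖S.dAdag 3 1 (S.dH 2 2 γ)‖, sq_nonneg ‖S.dA 2 2 γ‖]
      exact norm_eq_zero.mp (sq_eq_zero_iff.mp this)
    have hA : S.dA 2 2 γ = 0 := by
      have : ‖S.dA 2 2 γ‖^2 = 0 := by
        nlinarith [sq_nonneg ‖S.dH 2 3 (S.dA 2 2 γ)‖, sq_nonneg ‖S.dHdag 1 3 (S.dA 2 2 γ)‖,
          sq_nonneg ‖S.dAdag 3 1 (S.dH 2 2 γ)‖, sq_nonneg ‖S.dH 2 2 γ‖]
      exact norm_eq_zero.mp (sq_eq_zero_iff.mp this)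
    exact ⟨hH, hA, by simp [KS, dbarDagDdag, hH, hA, map_zero]⟩
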